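/- In any d-regular bipartite graph with n vertices on each side (d ≥ 1), every maximal matching has size at least (d/(2d-1))·n. -/

import Mathlib

/-- `M` is a matching in the bipartite graph with edge predicate `E`. -/
def IsMatching {U V : Type*} (E : U → V → Bool) (M : Finset (U × V)) : Prop :=
  (∀ p ∈ M, E p.1 p.2 = true) ∧
  (∀ p ∈ M, ∀ q ∈ M, p.1 = q.1 → p = q) ∧
  (∀ p ∈ M, ∀ q ∈ M, p.2 = q.2 → p = q)

/-- `M` is a maximal matching: no edge can be added. -/
def IsMaximalMatching {U V : Type*} (E : U → V → Bool) (M : Finset (U × V)) : Prop :=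
  IsMatching E M ∧
  ∀ u v, E u v = true → (∃ p ∈ M, p.1 = u) ∨ (∃ p ∈ M, p.2 = v)

/-- In a `d`-regular bipartite graph with `n` vertices on each side (`d ≥ 1`),
every maximal matching has size at least `(d/(2d-1))·n`. -/
theorem maximal_matching_lower_bound (n d : ℕ) (hd : 1 ≤ d)
    (E : Fin n → Fin n → Bool)
    (hdegU : ∀ u, (Finset.univ.filter (fun v => E u v = true)).card = d)
    (hdegV : ∀ v, (Finset.univ.filter (fun u => E u v = true)).card = d)
    (M : Finset (Fin n × Fin n)) (hM : IsMaximalMatching E M) :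
    d * n ≤ (2 * d - 1) * M.card := by
  classical
  obtain ⟨⟨hME, hM1, hM2⟩, hmax⟩ := hM
  set A : Finset (Fin n) := M.image Prod.fst with hA
  set B : Finset (Fin n) := M.image Prod.snd with hB
  have hAcard : A.card = M.card :=
    Finset.card_image_of_injOn (fun p hp q hq h => hM1 p hp q hq h)
  have hBcard : B.card = M.card :=
    Finset.card_image_of_injOn (fun p hp q hq h => hM2 p hp q hq h)
  set S : Finset (Fin n × Fin n) := Finset.univ.filter (fun p => E p.1 p.2 = true) with hS
  -- fibers over first coordinate have card d
  have hfibU : ∀ u : Fin n, (S.filter (fun p => p.1 = u)).card = d := by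
    intro u
    rw [← hdegU u]
    apply Finset.card_bij (fun p _ => p.2)
    · intro p hp
      simp only [hS, Finset.mem_filter, Finset.mem_univ, true_and] at hp ⊢
      rw [← hp.2]; exact hp.1
    · intro p hp q hq h
      simp only [hS, Finset.mem_filter] at hp hq
      exact Prod.ext (hp.2.trans hq.2.symm) h
    · intro v hv
      simp only [Finset.mem_filter, Finset.mem_univ, true_and] at hv
      exact ⟨(u, v), by simp [hS, hv], rfl⟩
  have hfibV : ∀ v : Fin n, (S.filter (fun p => p.2 = v)).card = d := by
    intro v
    rw [← hdegV v]
    apply Finset.card_bij (fun p _ => p.1)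
    · intro p hp
      simp only [hS, Finset.mem_filter, Finset.mem_univ, true_and] at hp ⊢
      rw [← hp.2]; exact hp.1
    · intro p hp q hq h
      simp only [hS, Finset.mem_filter] at hp hq
      exact Prod.ext h (hp.2.trans hq.2.symm)
    · intro u hu
      simp only [Finset.mem_filter, Finset.mem_univ, true_and] at hu
      exact ⟨(u, v), by simp [hS, hu], rfl⟩
  have hScard : S.card = d * n := by
    rw [Finset.card_eq_sum_card_fiberwise (f := Prod.fst) (t := Finset.univ)
      (fun x _ => Finset.mem_univ _)]
    simp [hfibU, Finset.sum_const, Finset.card_univ, mul_comm]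
  set SA := S.filter (fun p => p.1 ∈ A) with hSA
  set SB := S.filter (fun p => p.2 ∈ B) with hSB
  have hSAcard : SA.card ≤ d * M.card := by
    rw [Finset.card_eq_sum_card_fiberwise (s := SA) (f := Prod.fst) (t := A)
      (fun x hx => Finset.mem_coe.mpr (Finset.mem_filter.mp (Finset.mem_coe.mp hx)).2)]
    calc ∑ u ∈ A, (SA.filter (fun p => p.1 = u)).card
        ≤ ∑ u ∈ A, (S.filter (fun p => p.1 = u)).card := by
          apply Finset.sum_le_sum
          intro u _
          exact Finset.card_le_card (Finset.filter_subset_filter _ (Finset.filter_subset _ _))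
      _ = d * M.card := by simp [hfibU, Finset.sum_const, hAcard, mul_comm]
  have hSBcard : SB.card ≤ d * M.card := by
    rw [Finset.card_eq_sum_card_fiberwise (s := SB) (f := Prod.snd) (t := B)
      (fun x hx => Finset.mem_coe.mpr (Finset.mem_filter.mp (Finset.mem_coe.mp hx)).2)]
    calc ∑ v ∈ B, (SB.filter (fun p => p.2 = v)).card
        ≤ ∑ v ∈ B, (S.filter (fun p => p.2 = v)).card := by
          apply Finset.sum_le_sum
          intro v _
          exact Finset.card_le_card (Finset.filter_subset_filter _ (Finset.filter_subset _ _))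
      _ = d * M.card := by simp [hfibV, Finset.sum_const, hBcard, mul_comm]
  have hcover : S = SA ∪ SB := by
    apply Finset.Subset.antisymm
    · intro p hp
      have hpE : E p.1 p.2 = true := by
        simpa [hS] using hp
      rcases hmax p.1 p.2 hpE with ⟨q, hq, hq1⟩ | ⟨q, hq, hq2⟩
      · exact Finset.mem_union_left _ (Finset.mem_filter.mpr ⟨hp, hq1 ▸ Finset.mem_image_of_mem _ hq⟩)
      · exact Finset.mem_union_right _ (Finset.mem_filter.mpr ⟨hp, hq2 ▸ Finset.mem_image_of_mem _ hq⟩)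
    · exact Finset.union_subset (Finset.filter_subset _ _) (Finset.filter_subset _ _)
  have hMsub : M ⊆ SA ∩ SB := by
    intro p hp
    have hpS : p ∈ S := by simp [hS, hME p hp]
    exact Finset.mem_inter.mpr ⟨Finset.mem_filter.mpr ⟨hpS, Finset.mem_image_of_mem _ hp⟩,
      Finset.mem_filter.mpr ⟨hpS, Finset.mem_image_of_mem _ hp⟩⟩
  have hunion : (SA ∪ SB).card + (SA ∩ SB).card = SA.card + SB.card :=
    Finset.card_union_add_card_inter _ _
  have key : d * n + M.card ≤ d * M.card + d * M.card := by
    have h1 : M.card ≤ (SA ∩ SB).card := Finset.card_le_card hMsub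
    have h2 : d * n = (SA ∪ SB).card := by rw [← hcover, hScard]
    omega
  have heq : (2 * d - 1) * M.card = d * M.card + d * M.card - M.card := by
    rw [Nat.sub_mul, two_mul, Nat.add_mul, one_mul]
  rw [heq]
  omega
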